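/- In the maximal block partition of the item set, the size of each block satisfies f_w > Σ_{u<w, p_u/f_u = p_w/f_w} f_u b̃_u, i.e., each block's item size strictly exceeds the total size of all earlier blocks having the same gain-per-unit ratio. -/

import Mathlib

open Finset

/-- A list of (size, bound) pairs is a block: nonempty, sizes nondecreasing, and each
size is at most the first size plus the total size contributed by earlier items. -/
def IsBlockList (L : List (ℕ × ℕ)) : Prop :=
  L ≠ [] ∧ L.Pairwise (fun a b => a.1 ≤ b.1) ∧
  ∀ j, 0 < j → j < L.length →
    (L.getD j (0, 0)).1 ≤ (L.getD 0 (0, 0)).1 +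
      ∑ v ∈ range j, (L.getD v (0, 0)).2 * (L.getD v (0, 0)).1

private lemma sum_range_take (L : List (ℕ × ℕ)) (j : ℕ) (hj : j ≤ L.length) :
    ∑ v ∈ range j, (L.getD v (0, 0)).2 * (L.getD v (0, 0)).1
      = ((L.take j).map (fun x => x.2 * x.1)).sum := by
  induction j with
  | zero => simp
  | succ n ih =>
    have hn : n < L.length := by omega
    have hn' : n < (L.map (fun x : ℕ × ℕ => x.2 * x.1)).length := by simpa using hn
    have h1 : ((L.map (fun x : ℕ × ℕ => x.2 * x.1)).take (n+1)).sum
        = ((L.map (fun x : ℕ × ℕ => x.2 * x.1)).take n).sum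
          + (L.map (fun x : ℕ × ℕ => x.2 * x.1))[n]'hn' :=
      List.sum_take_succ _ n hn'
    rw [Finset.sum_range_succ, ih (by omega), ← List.map_take, ← List.map_take] at *
    rw [h1, List.getElem_map, List.getD_eq_getElem L _ hn]

private lemma mem_ge_head {A : List (ℕ × ℕ)} (hA : IsBlockList A) :
    ∀ a ∈ A, (A.getD 0 (0, 0)).1 ≤ a.1 := by
  obtain ⟨h, t, rfl⟩ := List.exists_cons_of_ne_nil hA.1
  intro a ha
  rcases List.mem_cons.mp ha with rfl | ha
  · simp
  · simpa using List.rel_of_pairwise_cons hA.2.1 ha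

/-- sum of contributions over a filtered list is monotone in the predicate -/
private lemma filter_sum_mono {P Q : ℕ × ℕ → Bool} (l : List (ℕ × ℕ))
    (hPQ : ∀ a, P a = true → Q a = true) :
    ((l.filter P).map (fun x => x.2 * x.1)).sum
      ≤ ((l.filter Q).map (fun x => x.2 * x.1)).sum := by
  have h1 : l.filter P = (l.filter Q).filter P := by
    rw [List.filter_filter]
    apply List.filter_congr
    intro x _
    by_cases h : P x = true
    · simp [h, hPQ x h]
    · simp at h; simp [h]
  rw [h1]
  exact List.Sublist.sum_le_sum (List.Sublist.map _ List.filter_sublist)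
    (fun a _ => Nat.zero_le a)

private lemma block_threshold {A : List (ℕ × ℕ)} (hA : IsBlockList A) (T : ℕ)
    (hT : ∃ a ∈ A, T ≤ a.1) :
    T ≤ (A.getD 0 (0, 0)).1
      + ((A.filter (fun a => decide (a.1 < T))).map (fun x => x.2 * x.1)).sum := by
  set P : ℕ × ℕ → Bool := fun a => decide (T ≤ a.1) with hP
  have hex : ∃ a ∈ A, P a = true := by
    obtain ⟨a, ha, hta⟩ := hT; exact ⟨a, ha, by simp [hP, hta]⟩
  have hi : A.findIdx P < A.length := List.findIdx_lt_length_of_exists hex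
  set i := A.findIdx P with hidef
  have hpi : T ≤ A[i].1 := by
    have := List.findIdx_getElem (w := hi)
    simpa [hP] using this
  -- every element of A.take i has size < T
  have htake : ∀ a ∈ A.take i, (fun a : ℕ × ℕ => decide (a.1 < T)) a = true := by
    intro a ha
    obtain ⟨v, hv, rfl⟩ := List.mem_iff_getElem.mp ha
    have hvi : v < i := by
      have := hv; rw [List.length_take] at this; omega
    have := List.not_of_lt_findIdx (p := P) (xs := A) (by rwa [← hidef])
    rw [List.getElem_take]
    simp only [hP, decide_eq_false_iff_not, not_le] at this
    simp [this]
  have hsum : ((A.take i).map (fun x => x.2 * x.1)).sum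
      ≤ ((A.filter (fun a => decide (a.1 < T))).map (fun x => x.2 * x.1)).sum := by
    have h1 : A.take i = (A.take i).filter (fun a => decide (a.1 < T)) :=
      (List.filter_eq_self.mpr htake).symm
    rw [h1]
    exact List.Sublist.sum_le_sum
      (List.Sublist.map _ (List.Sublist.filter _ (List.take_sublist i A)))
      (fun a _ => Nat.zero_le a)
  rcases Nat.eq_zero_or_pos i with h0 | h0
  · have : T ≤ (A.getD 0 (0, 0)).1 := by
      rw [List.getD_eq_getElem A _ (by omega : 0 < A.length)]
      simp only [h0] at hpi
      exact hpi
    omega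
  · have hb := hA.2.2 i h0 hi
    rw [sum_range_take A i (le_of_lt hi), List.getD_eq_getElem A _ hi] at hb
    omega

/-- head of a block B bounded using only the part of A smaller than it -/
private lemma head_bound {A : List (ℕ × ℕ)} (hA : IsBlockList A) (T : ℕ)
    (hsize : T ≤ (A.getD 0 (0, 0)).1 + (A.map (fun x => x.2 * x.1)).sum) :
    T ≤ (A.getD 0 (0, 0)).1
      + ((A.filter (fun a => decide (a.1 < T))).map (fun x => x.2 * x.1)).sum := by
  by_cases hex : ∃ a ∈ A, T ≤ a.1
  · exact block_threshold hA T hex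
  · push_neg at hex
    have : A.filter (fun a => decide (a.1 < T)) = A :=
      List.filter_eq_self.mpr (fun a ha => by simp [hex a ha])
    rw [this]; exact hsize

private lemma merged_block {A B : List (ℕ × ℕ)} (hA : IsBlockList A) (hB : IsBlockList B)
    (hAB : (A.getD 0 (0, 0)).1 ≤ (B.getD 0 (0, 0)).1)
    (hsize : (B.getD 0 (0, 0)).1 ≤ (A.getD 0 (0, 0)).1 + (A.map (fun x => x.2 * x.1)).sum) :
    IsBlockList ((A ++ B).mergeSort (fun a b => decide (a.1 ≤ b.1))) := by
  set le : ℕ × ℕ → ℕ × ℕ → Bool := fun a b => decide (a.1 ≤ b.1) with hle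
  set L := (A ++ B).mergeSort le with hL
  have hperm : L.Perm (A ++ B) := List.mergeSort_perm _ _
  have hlen : L.length = A.length + B.length := by
    rw [hperm.length_eq, List.length_append]
  have hAne : A ≠ [] := hA.1
  have hne : L ≠ [] := by
    have hAlen : 0 < A.length := List.length_pos_iff.mpr hAne
    intro h
    rw [h] at hlen
    simp only [List.length_nil] at hlen
    omega
  have hsorted : L.Pairwise (fun a b : ℕ × ℕ => a.1 ≤ b.1) := by
    have := List.pairwise_mergeSort (le := le)
      (fun a b c hab hbc => by simp [hle] at *; omega)
      (fun a b => by simp [hle]; omega) (A ++ B)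
    exact this.imp (fun h => by simpa [hle] using h)
  -- every element of A ++ B has size at least fA
  have hfa : ∀ a ∈ A ++ B, (A.getD 0 (0, 0)).1 ≤ a.1 := by
    intro a ha
    rcases List.mem_append.mp ha with ha | ha
    · exact mem_ge_head hA a ha
    · exact le_trans hAB (mem_ge_head hB a ha)
  refine ⟨hne, hsorted, ?_⟩
  intro j hj0 hjlen
  rw [List.getD_eq_getElem L _ hjlen]
  set x := L[j] with hx
  set s := x.1 with hs
  have hxmem : x ∈ A ++ B := hperm.mem_iff.mp (List.getElem_mem hjlen)
  -- combined bound: s ≤ fA + sum over elements of A++B of size < s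
  have hcomb : s ≤ (A.getD 0 (0, 0)).1
      + (((A ++ B).filter (fun a => decide (a.1 < s))).map (fun x => x.2 * x.1)).sum := by
    rw [List.filter_append, List.map_append, List.sum_append]
    rcases List.mem_append.mp hxmem with hxa | hxb
    · have := block_threshold hA s ⟨x, hxa, le_rfl⟩
      omega
    · have h1 := block_threshold hB s ⟨x, hxb, le_rfl⟩
      have h2 := head_bound hA (B.getD 0 (0, 0)).1 hsize
      have h3 : ((A.filter (fun a => decide (a.1 < (B.getD 0 (0, 0)).1))).map
            (fun x => x.2 * x.1)).sum
          ≤ ((A.filter (fun a => decide (a.1 < s))).map (fun x => x.2 * x.1)).sum := by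
        apply filter_sum_mono
        intro a ha
        simp only [decide_eq_true_iff] at *
        have := mem_ge_head hB x hxb
        omega
      omega
  -- fA ≤ L[0].1
  have h0len : 0 < L.length := List.length_pos_iff.mpr hne
  have hL0 : (A.getD 0 (0, 0)).1 ≤ (L.getD 0 (0, 0)).1 := by
    rw [List.getD_eq_getElem L _ h0len]
    exact hfa _ (hperm.mem_iff.mp (List.getElem_mem h0len))
  -- sum over filter ≤ prefix sum
  have hdropfil : (L.drop j).filter (fun a => decide (a.1 < s)) = [] := by
    rw [List.filter_eq_nil_iff]
    intro a ha
    have hdj : L.drop j = x :: L.drop (j + 1) := List.drop_eq_getElem_cons hjlen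
    have hsd : (L.drop j).Pairwise (fun a b : ℕ × ℕ => a.1 ≤ b.1) := hsorted.drop
    rw [hdj] at hsd ha
    rcases List.mem_cons.mp ha with rfl | ha
    · simp [hs]
    · have := List.rel_of_pairwise_cons hsd ha
      simp; omega
  have hfilterL : L.filter (fun a => decide (a.1 < s))
      = (L.take j).filter (fun a => decide (a.1 < s)) := by
    conv_lhs => rw [← List.take_append_drop j L]
    rw [List.filter_append, hdropfil, List.append_nil]
  have hprefix : ((L.filter (fun a => decide (a.1 < s))).map (fun x => x.2 * x.1)).sum
      ≤ ((L.take j).map (fun x => x.2 * x.1)).sum := by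
    rw [hfilterL]
    exact List.Sublist.sum_le_sum (List.Sublist.map _ List.filter_sublist)
      (fun a _ => Nat.zero_le a)
  have hpermsum : (((A ++ B).filter (fun a => decide (a.1 < s))).map
        (fun x => x.2 * x.1)).sum
      = ((L.filter (fun a => decide (a.1 < s))).map (fun x => x.2 * x.1)).sum :=
    (List.Perm.sum_eq (List.Perm.map _ (hperm.filter _))).symm
  rw [sum_range_take L j (le_of_lt hjlen)]
  omega

theorem maximal_block_size_property
    (t : ℕ) (items : ℕ → List (ℕ × ℕ)) (f : ℕ → ℕ) (p : ℕ → ℚ)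
    (hblk : ∀ w ∈ Icc 1 t, IsBlockList (items w))
    (hchainpos : ∀ w ∈ Icc 1 t, ∀ x ∈ items w, 0 < x.1 ∧ 0 < x.2)
    (hchain : ∀ w ∈ Icc 1 t, ∀ x ∈ items w, ∀ w' ∈ Icc 1 t, ∀ x' ∈ items w',
      x.1 ∣ x'.1 ∨ x'.1 ∣ x.1)
    (hf : ∀ w ∈ Icc 1 t, f w = ((items w).getD 0 (0, 0)).1)
    (hfmono : ∀ u w, 1 ≤ u → u ≤ w → w ≤ t → f u ≤ f w)
    (hmax : ∀ u w, 1 ≤ u → u < w → w ≤ t →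
      p u * (f w : ℚ) = p w * (f u : ℚ) →
      ∀ L : List (ℕ × ℕ), L.Perm (items u ++ items w) → ¬ IsBlockList L) :
    ∀ w ∈ Icc 1 t,
      (∑ u ∈ (Icc 1 (w - 1)).filter (fun u => p u * (f w : ℚ) = p w * (f u : ℚ)),
        ((items u).map (fun x => x.2 * x.1)).sum) < f w := by
  -- positivity of f on Icc 1 t
  have hfpos : ∀ w ∈ Icc 1 t, 0 < f w := by
    intro w hw
    obtain ⟨h, tl, hwl⟩ := List.exists_cons_of_ne_nil (hblk w hw).1
    have := (hchainpos w hw h (by rw [hwl]; exact List.mem_cons_self)).1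
    rw [hf w hw, hwl]
    simpa using this
  intro w hw
  induction w using Nat.strong_induction_on with
  | _ w ih =>
  by_contra hcon
  push_neg at hcon
  set U := (Icc 1 (w - 1)).filter (fun u => p u * (f w : ℚ) = p w * (f u : ℚ)) with hU
  have hwIcc := hw
  rw [Finset.mem_Icc] at hwIcc
  have hUne : U.Nonempty := by
    by_contra hUe
    rw [Finset.not_nonempty_iff_eq_empty] at hUe
    rw [hUe] at hcon
    simp at hcon
    have := hfpos w hw
    omega
  set u := U.max' hUne with hu
  have huU : u ∈ U := Finset.max'_mem U hUne
  have huIcc : 1 ≤ u ∧ u ≤ w - 1 := by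
    have := huU; rw [hU, Finset.mem_filter, Finset.mem_Icc] at this; exact this.1
  have hur : p u * (f w : ℚ) = p w * (f u : ℚ) := by
    have := huU; rw [hU, Finset.mem_filter] at this; exact this.2
  have huw : u < w := by omega
  have huT : u ∈ Icc 1 t := by rw [Finset.mem_Icc]; omega
  -- cast nonzero facts
  have hfwQ : (f w : ℚ) ≠ 0 := by
    have := hfpos w hw; positivity
  have hfuQ : (f u : ℚ) ≠ 0 := by
    have := hfpos u huT; positivity
  -- ratio equivalence for u' < u
  have hratio : ∀ u', (p u' * (f w : ℚ) = p w * (f u' : ℚ)) ↔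
      (p u' * (f u : ℚ) = p u * (f u' : ℚ)) := by
    intro u'
    constructor
    · intro h
      have : p u' * (f u : ℚ) * (f w : ℚ) = p u * (f u' : ℚ) * (f w : ℚ) := by
        calc p u' * (f u : ℚ) * (f w : ℚ) = (p u' * (f w : ℚ)) * (f u : ℚ) := by ring
        _ = (p w * (f u' : ℚ)) * (f u : ℚ) := by rw [h]
        _ = (p w * (f u : ℚ)) * (f u' : ℚ) := by ring
        _ = (p u * (f w : ℚ)) * (f u' : ℚ) := by rw [← hur]
        _ = p u * (f u' : ℚ) * (f w : ℚ) := by ring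
      exact mul_right_cancel₀ hfwQ this
    · intro h
      have : p u' * (f w : ℚ) * (f u : ℚ) = p w * (f u' : ℚ) * (f u : ℚ) := by
        calc p u' * (f w : ℚ) * (f u : ℚ) = (p u' * (f u : ℚ)) * (f w : ℚ) := by ring
        _ = (p u * (f u' : ℚ)) * (f w : ℚ) := by rw [h]
        _ = (p u * (f w : ℚ)) * (f u' : ℚ) := by ring
        _ = (p w * (f u : ℚ)) * (f u' : ℚ) := by rw [hur]
        _ = p w * (f u' : ℚ) * (f u : ℚ) := by ring
      exact mul_right_cancel₀ hfuQ this
  -- U = insert u (U at level u)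
  have hUsplit : U = insert u ((Icc 1 (u - 1)).filter
      (fun u' => p u' * (f u : ℚ) = p u * (f u' : ℚ))) := by
    ext v
    simp only [Finset.mem_insert, Finset.mem_filter, Finset.mem_Icc, hU]
    constructor
    · rintro ⟨⟨h1, h2⟩, h3⟩
      by_cases hv : v = u
      · left; exact hv
      · right
        have hvu : v < u := by
          have : v ≤ u := Finset.le_max' U v (by rw [hU, Finset.mem_filter, Finset.mem_Icc]; exact ⟨⟨h1, h2⟩, h3⟩)
          omega
        exact ⟨⟨h1, by omega⟩, (hratio v).mp h3⟩
    · rintro (rfl | ⟨⟨h1, h2⟩, h3⟩)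
      · exact ⟨⟨huIcc.1, huIcc.2⟩, hur⟩
      · exact ⟨⟨h1, by omega⟩, (hratio v).mpr h3⟩
  have hunotin : u ∉ (Icc 1 (u - 1)).filter
      (fun u' => p u' * (f u : ℚ) = p u * (f u' : ℚ)) := by
    rw [Finset.mem_filter, Finset.mem_Icc]
    omega
  -- apply induction hypothesis at u
  have hihu := ih u huw huT
  have hsum : ∑ v ∈ U, ((items v).map (fun x => x.2 * x.1)).sum
      < ((items u).map (fun x => x.2 * x.1)).sum + f u := by
    rw [hUsplit, Finset.sum_insert hunotin]
    omega
  have hkey : f w < f u + ((items u).map (fun x => x.2 * x.1)).sum := by omega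
  -- now contradict maximality
  have hfu' : f u = ((items u).getD 0 (0, 0)).1 := hf u huT
  have hfw' : f w = ((items w).getD 0 (0, 0)).1 := hf w hw
  have hmerged := merged_block (hblk u huT) (hblk w hw)
    (by rw [← hfu', ← hfw']; exact hfmono u w huIcc.1 (by omega) hwIcc.2)
    (by rw [← hfu', ← hfw']; omega)
  exact hmax u w huIcc.1 huw hwIcc.2 hur _
    (List.mergeSort_perm _ _) hmerged
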